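/- Let G be a finite cyclic group of order m coprime to 6 with generator g. Then 1 - g + g^2 is invertible in ZG. -/

import Mathlib

open Finset MonoidAlgebra
open scoped Classical

noncomputable section

private lemma geom_sum_mul_geom_sum_pow {R : Type*} [CommRing R] (a : R) (n k : ℕ) :
    (∑ i ∈ range n, a ^ i) * (∑ j ∈ range k, (a ^ n) ^ j) = ∑ l ∈ range (n * k), a ^ l := by
  induction k with
  | zero => simp
  | succ k ih =>
    rw [Finset.sum_range_succ, mul_add, ih, Nat.mul_succ, Finset.sum_range_add]
    congr 1
    rw [Finset.sum_mul]
    refine Finset.sum_congr rfl fun i _ => ?_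
    rw [← pow_mul, ← pow_add, add_comm]

/-- In a cyclic group `G = ⟨g⟩` of order `m` coprime to `6`, the element
`1 - g + g²` (the sixth cyclotomic polynomial evaluated at `g`) is a unit of `ℤG`. -/
theorem isUnit_one_sub_g_add_gsq {G : Type*} [CommGroup G] [Fintype G]
    (m : ℕ) (hm : Fintype.card G = m) (hcop : Nat.Coprime m 6)
    (g : G) (hg : ∀ x : G, x ∈ Subgroup.zpowers g) :
    IsUnit ((1 : MonoidAlgebra ℤ G) - MonoidAlgebra.of ℤ G g
      + MonoidAlgebra.of ℤ G (g ^ 2)) := by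
  -- m is odd and coprime to 3
  have hm2 : Nat.Coprime m 2 := hcop.coprime_dvd_right (by norm_num)
  have hm3 : Nat.Coprime 3 m := (hcop.coprime_dvd_right (by norm_num)).symm
  have hmodd : Odd m := hm2.odd_of_right
  -- find odd k and t with 3 * k = t * m + 1
  obtain ⟨k, t, hk, hkt⟩ : ∃ k t : ℕ, Odd k ∧ 3 * k = t * m + 1 := by
    have hmpos : 0 < m := hmodd.pos
    rcases (show 1 = m ∨ 1 < m from Nat.eq_or_lt_of_le hmpos) with h1 | h1
    · exact ⟨1, 2, ⟨0, rfl⟩, by omega⟩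
    · obtain ⟨k0, -, hk0⟩ := Nat.exists_mul_mod_eq_one_of_coprime hm3 h1
      have hdm := Nat.div_add_mod (3 * k0) m
      rw [hk0] at hdm
      rcases Nat.even_or_odd k0 with he | ho
      · refine ⟨k0 + m, 3 * k0 / m + 3, he.add_odd hmodd, ?_⟩
        rw [add_mul, mul_comm (3 * k0 / m) m]
        omega
      · exact ⟨k0, 3 * k0 / m, ho, by rw [mul_comm (3 * k0 / m) m]; omega⟩
  have ht : Even t := by
    have h3k : Odd (3 * k) := Nat.odd_mul.2 ⟨⟨1, rfl⟩, hk⟩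
    rw [hkt] at h3k
    have : Even (t * m) := by
      rcases Nat.even_or_odd (t * m) with h | h
      · exact h
      · exact absurd (h.add_one) (by simpa using h3k)
    exact (Nat.even_mul.1 this).resolve_right (by simpa using hmodd)
  -- set up the ring element
  set a : MonoidAlgebra ℤ G := -(MonoidAlgebra.of ℤ G g) with ha
  have hgm : g ^ m = 1 := by rw [← hm]; exact pow_card_eq_one
  have ham : a ^ m = -1 := by
    rw [ha, neg_pow, ← map_pow, hgm, hmodd.neg_one_pow, map_one, neg_one_mul]
  -- the target element is the geometric sum of a of length 3
  have htarget : (1 : MonoidAlgebra ℤ G) - MonoidAlgebra.of ℤ G g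
      + MonoidAlgebra.of ℤ G (g ^ 2) = ∑ i ∈ range 3, a ^ i := by
    rw [show (3:ℕ) = 2 + 1 from rfl, Finset.sum_range_succ, Finset.sum_range_succ,
      Finset.sum_range_succ, Finset.sum_range_zero]
    rw [ha, map_pow]
    ring
  rw [htarget]
  -- explicit inverse
  refine IsUnit.of_mul_eq_one (∑ j ∈ range k, (a ^ 3) ^ j) ?_
  rw [geom_sum_mul_geom_sum_pow, hkt, Finset.sum_range_succ,
    show t * m = m * t by ring, ← geom_sum_mul_geom_sum_pow, pow_mul a m t, ham]
  rw [neg_one_geom_sum, if_pos ht, mul_zero, zero_add, ht.neg_one_pow]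

end
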